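/- Let R = k[x_1,...,x_d] and I an 𝔪-primary ideal generated by forms of degree n. Then the integral closure of I^m equals 𝔪^{nm} for all m ≥ 1, and consequently the normalized multiplicity satisfies ē_0(I) = n^d. -/

import Mathlib

open MvPolynomial Filter

/-- The irrelevant (homogeneous maximal) ideal of `k[x_1, …, x_d]`. -/
noncomputable def mxIdeal (k : Type) [Field k] (d : ℕ) : Ideal (MvPolynomial (Fin d) k) :=
  Ideal.span (Set.range MvPolynomial.X)

/-- `x` is integral over the ideal `I`: it satisfies an equation
`x^n + c₁x^{n-1} + ⋯ + cₙ = 0` with `cᵢ ∈ Iⁱ`. -/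
def isIntegralOverIdeal {R : Type} [CommRing R] (I : Ideal R) (x : R) : Prop :=
  ∃ (n : ℕ) (c : ℕ → R), 0 < n ∧ (∀ i, 1 ≤ i → i ≤ n → c i ∈ I ^ i) ∧
    x ^ n + ∑ i ∈ Finset.range n, c (i + 1) * x ^ (n - (i + 1)) = 0

namespace ICAux

variable {k : Type} [Field k] {d : ℕ}

lemma degree_eq_sum_univ (μ : Fin d →₀ ℕ) : Finsupp.degree μ = ∑ i, μ i := by
  rw [Finsupp.degree]
  exact Finset.sum_subset (Finset.subset_univ _) (by
    intro i _ hi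
    simpa using (Finsupp.notMem_support_iff.mp hi))

lemma degree_add (μ ν : Fin d →₀ ℕ) :
    Finsupp.degree (μ + ν) = Finsupp.degree μ + Finsupp.degree ν := by
  simp [degree_eq_sum_univ, Finset.sum_add_distrib]

lemma degree_mono {μ ν : Fin d →₀ ℕ} (h : μ ≤ ν) :
    Finsupp.degree μ ≤ Finsupp.degree ν := by
  rw [degree_eq_sum_univ, degree_eq_sum_univ]
  exact Finset.sum_le_sum fun i _ => h i

lemma degree_single (i : Fin d) (c : ℕ) : Finsupp.degree (Finsupp.single i c) = c := by
  rw [degree_eq_sum_univ]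
  simp [Finsupp.single_apply]

lemma prod_X_pow_mem (μ : Fin d →₀ ℕ) (t : Finset (Fin d)) :
    (∏ i ∈ t, (X i : MvPolynomial (Fin d) k) ^ μ i) ∈ (mxIdeal k d) ^ (∑ i ∈ t, μ i) := by
  classical
  induction t using Finset.induction_on with
  | empty => simp
  | insert _ _ hx ih =>
    rw [Finset.prod_insert hx, Finset.sum_insert hx, pow_add]
    exact Ideal.mul_mem_mul
      (Ideal.pow_mem_pow (Ideal.subset_span (Set.mem_range_self _)) _) ih

lemma monomial_mem_pow {μ : Fin d →₀ ℕ} {c : k} {a : ℕ} (h : a ≤ Finsupp.degree μ) :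
    (monomial μ c : MvPolynomial (Fin d) k) ∈ mxIdeal k d ^ a := by
  have h1 : (monomial μ c : MvPolynomial (Fin d) k)
      = C c * ∏ i ∈ μ.support, (X i : MvPolynomial (Fin d) k) ^ μ i := by
    rw [monomial_eq]; rfl
  rw [h1]
  refine Ideal.mul_mem_left _ _ ?_
  exact Ideal.pow_le_pow_right h (prod_X_pow_mem μ μ.support)

lemma pow_le_span (a : ℕ) :
    (mxIdeal k d) ^ a ≤
      Ideal.span ((fun s => (monomial s (1 : k) : MvPolynomial (Fin d) k)) ''
        {σ | Finsupp.degree σ = a}) := by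
  induction a with
  | zero =>
    rw [pow_zero, Ideal.one_eq_top, top_le_iff, Ideal.eq_top_iff_one]
    exact Ideal.subset_span ⟨0, by simp [map_zero], by simp⟩
  | succ a ih =>
    rw [pow_succ]
    have h1 : mxIdeal k d ≤ Ideal.span ((fun s => (monomial s (1 : k) : MvPolynomial (Fin d) k)) ''
        {σ | Finsupp.degree σ = 1}) := by
      rw [mxIdeal, Ideal.span_le]
      rintro _ ⟨i, rfl⟩
      exact Ideal.subset_span ⟨Finsupp.single i 1, degree_single i 1, rfl⟩
    refine le_trans (Ideal.mul_mono ih h1) ?_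
    rw [Ideal.span_mul_span']
    rw [Ideal.span_le]
    rintro z hz
    rw [Set.mem_mul] at hz
    obtain ⟨u, ⟨μ, hμ, rfl⟩, v, ⟨ν, hν, rfl⟩, rfl⟩ := hz
    refine Ideal.subset_span ⟨μ + ν, ?_, ?_⟩
    · simp only [Set.mem_setOf_eq] at hμ hν ⊢
      rw [degree_add, hμ, hν]
    · simp [monomial_mul]

lemma mem_pow_iff {p : MvPolynomial (Fin d) k} {a : ℕ} :
    p ∈ mxIdeal k d ^ a ↔ ∀ μ ∈ p.support, a ≤ Finsupp.degree μ := by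
  constructor
  · intro hp μ hμ
    have := pow_le_span (k := k) (d := d) a hp
    rw [mem_ideal_span_monomial_image] at this
    obtain ⟨si, hsi, hle⟩ := this μ hμ
    rw [Set.mem_setOf_eq] at hsi
    rw [← hsi]
    exact degree_mono hle
  · intro h
    rw [as_sum p]
    exact Submodule.sum_mem _ fun μ hμ => monomial_mem_pow (h μ hμ)

lemma homog_mem_pow {p : MvPolynomial (Fin d) k} {u : ℕ} (h : p.IsHomogeneous u) :
    p ∈ mxIdeal k d ^ u := by
  rw [mem_pow_iff]
  intro μ hμ
  have := h (mem_support_iff.mp hμ)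
  rw [Pi.one_def, ← Finsupp.degree_eq_weight_one] at this
  omega

lemma mem_pow_iff_component {p : MvPolynomial (Fin d) k} {a : ℕ} :
    p ∈ mxIdeal k d ^ a ↔ ∀ u < a, homogeneousComponent u p = 0 := by
  rw [mem_pow_iff]
  constructor
  · intro h u hu
    ext μ
    rw [coeff_homogeneousComponent, coeff_zero]
    split_ifs with hd
    · by_contra hc
      have := h μ (mem_support_iff.mpr hc)
      omega
    · rfl
  · intro h μ hμ
    by_contra hc
    push_neg at hc
    have h0 := h _ hc
    have := coeff_homogeneousComponent (Finsupp.degree μ) p μ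
    rw [h0, coeff_zero, if_pos rfl] at this
    exact (mem_support_iff.mp hμ) this.symm

end ICAux

namespace ICAux

noncomputable def phi {k : Type} [Field k] {d : ℕ} :
    MvPolynomial (Fin d) k →ₐ[k] Polynomial (MvPolynomial (Fin d) k) :=
  aeval (fun i => Polynomial.C (X i) * Polynomial.X)

variable {k : Type} [Field k] {d : ℕ}

lemma phi_monomial (μ : Fin d →₀ ℕ) (c : k) :
    phi (monomial μ c) =
      Polynomial.C (monomial μ c : MvPolynomial (Fin d) k) *
        Polynomial.X ^ (Finsupp.degree μ) := by
  rw [phi, aeval_monomial]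
  have h1 : (μ.prod fun i e => (Polynomial.C (X i : MvPolynomial (Fin d) k) * Polynomial.X) ^ e)
      = Polynomial.C (μ.prod fun i e => (X i : MvPolynomial (Fin d) k) ^ e) *
        Polynomial.X ^ (Finsupp.degree μ) := by
    rw [Finsupp.prod, Finsupp.prod]
    simp_rw [mul_pow, ← map_pow]
    rw [Finset.prod_mul_distrib, ← map_prod, Finset.prod_pow_eq_pow_sum]
    rfl
  rw [h1]
  have h2 : algebraMap k (Polynomial (MvPolynomial (Fin d) k)) c
      = Polynomial.C (C c : MvPolynomial (Fin d) k) := rfl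
  rw [h2, ← mul_assoc, ← map_mul, ← monomial_eq]

lemma phi_coeff (p : MvPolynomial (Fin d) k) (u : ℕ) :
    (phi p).coeff u = homogeneousComponent u p := by
  induction p using MvPolynomial.induction_on' with
  | monomial μ c =>
    rw [phi_monomial]
    rw [Polynomial.coeff_C_mul, Polynomial.coeff_X_pow]
    have hmem : (monomial μ c : MvPolynomial (Fin d) k)
        ∈ homogeneousSubmodule (Fin d) k (Finsupp.degree μ) :=
      isHomogeneous_monomial _ rfl
    rw [homogeneousComponent_of_mem hmem]
    by_cases h : u = Finsupp.degree μ <;> simp [h]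
  | add p q hp hq =>
    rw [map_add, Polynomial.coeff_add, map_add, hp, hq]

lemma mem_pow_iff_phi {p : MvPolynomial (Fin d) k} {a : ℕ} :
    p ∈ mxIdeal k d ^ a ↔ ∀ u < a, (phi p).coeff u = 0 := by
  rw [mem_pow_iff_component]
  exact forall₂_congr fun u _ => by rw [phi_coeff]

lemma phi_homog {p : MvPolynomial (Fin d) k} {n : ℕ} (hp : p.IsHomogeneous n) :
    phi p = Polynomial.C p * Polynomial.X ^ n := by
  ext u
  rw [phi_coeff, Polynomial.coeff_C_mul, Polynomial.coeff_X_pow,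
    homogeneousComponent_of_mem hp]
  by_cases h : u = n <;> simp [h]

lemma trailing_pow (y : Polynomial (MvPolynomial (Fin d) k)) (hy : y ≠ 0) (t : ℕ) :
    (y ^ t).natTrailingDegree = t * y.natTrailingDegree ∧
      (y ^ t).trailingCoeff = y.trailingCoeff ^ t := by
  induction t with
  | zero =>
    constructor
    · simp
    · rw [pow_zero, pow_zero, Polynomial.trailingCoeff, Polynomial.natTrailingDegree_one,
        Polynomial.coeff_one_zero]
  | succ t ih =>
    rw [pow_succ, Polynomial.natTrailingDegree_mul (pow_ne_zero t hy) hy,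
      Polynomial.trailingCoeff_mul, ih.1, ih.2, pow_succ]
    constructor
    · ring
    · rfl

/-- The powers of the maximal ideal are integrally closed. -/
lemma integral_mem {a : ℕ} {x : MvPolynomial (Fin d) k}
    (hx : isIntegralOverIdeal (mxIdeal k d ^ a) x) : x ∈ mxIdeal k d ^ a := by
  by_contra hxa
  have hx0 : x ≠ 0 := by rintro rfl; exact hxa (zero_mem _)
  have ha : 0 < a := by
    rcases Nat.eq_zero_or_pos a with h | h
    · exact absurd (by rw [h, pow_zero, Ideal.one_eq_top]; trivial) hxa
    · exact h
  -- the image y and its trailing degree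
  set y : Polynomial (MvPolynomial (Fin d) k) := phi x with hy_def
  have hy0 : y ≠ 0 := by
    intro h
    apply hxa
    rw [mem_pow_iff_phi]
    intro u _
    rw [← hy_def, h, Polynomial.coeff_zero]
  set j : ℕ := y.natTrailingDegree with hj_def
  have hja : j < a := by
    rw [mem_pow_iff_phi] at hxa
    push_neg at hxa
    obtain ⟨u, hu, hcu⟩ := hxa
    exact lt_of_le_of_lt (Polynomial.natTrailingDegree_le_of_ne_zero hcu) hu
  obtain ⟨T, c, hT, hc, heq⟩ := hx
  -- apply phi to the equation and take the coefficient at T * j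
  have heq2 : y ^ T + ∑ i ∈ Finset.range T, phi (c (i + 1)) * y ^ (T - (i + 1)) = 0 := by
    have := congrArg phi heq
    rw [map_add, map_pow, map_sum, map_zero] at this
    simpa [hy_def] using this
  have hcoeff := congrArg (fun q => Polynomial.coeff q (T * j)) heq2
  simp only [Polynomial.coeff_add, Polynomial.coeff_zero, Polynomial.finset_sum_coeff] at hcoeff
  -- the leading term has nonzero coefficient
  have hyT : (y ^ T).coeff (T * j) = y.trailingCoeff ^ T := by
    have h1 := (trailing_pow y hy0 T).1
    have h2 := (trailing_pow y hy0 T).2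
    rw [← h2, ← h1, Polynomial.trailingCoeff]
  have hyT0 : (y ^ T).coeff (T * j) ≠ 0 := by
    rw [hyT]
    exact pow_ne_zero _ (Polynomial.trailingCoeff_nonzero_iff_nonzero.mpr hy0)
  -- each other term vanishes
  have hterm : ∀ i ∈ Finset.range T,
      (phi (c (i + 1)) * y ^ (T - (i + 1))).coeff (T * j) = 0 := by
    intro i hi
    rw [Finset.mem_range] at hi
    have hci : c (i + 1) ∈ mxIdeal k d ^ (a * (i + 1)) := by
      have := hc (i + 1) (by omega) (by omega)
      rwa [← pow_mul] at this
    rw [Polynomial.coeff_mul]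
    refine Finset.sum_eq_zero ?_
    rintro ⟨u, v⟩ huv
    rw [Finset.HasAntidiagonal.mem_antidiagonal] at huv
    simp only at huv
    show (phi (c (i + 1))).coeff u * (y ^ (T - (i + 1))).coeff v = 0
    by_cases hu : u < a * (i + 1)
    · rw [mem_pow_iff_phi] at hci
      rw [hci u hu, zero_mul]
    · push_neg at hu
      have hvlt : v < (T - (i + 1)) * j := by
        have h1 : (i + 1) * j + (i + 1) ≤ a * (i + 1) := by
          have h3 : (j + 1) * (i + 1) ≤ a * (i + 1) := Nat.mul_le_mul_right _ (by omega)
          calc (i + 1) * j + (i + 1) = (j + 1) * (i + 1) := by ring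
          _ ≤ a * (i + 1) := h3
        have h2 : (T - (i + 1)) * j = T * j - (i + 1) * j := Nat.sub_mul T (i + 1) j
        omega
      have hntd : (y ^ (T - (i + 1))).natTrailingDegree = (T - (i + 1)) * j := by
        rw [(trailing_pow y hy0 (T - (i + 1))).1, mul_comm]
      have hz : (y ^ (T - (i + 1))).coeff v = 0 :=
        Polynomial.coeff_eq_zero_of_lt_natTrailingDegree (by rw [hntd]; exact hvlt)
      rw [hz, mul_zero]
  rw [Finset.sum_congr rfl hterm, Finset.sum_const, smul_zero, add_zero] at hcoeff
  exact hyT0 hcoeff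

end ICAux

namespace ICAux

variable {k : Type} [Field k] {d : ℕ}

lemma component_mul_homog (g p : MvPolynomial (Fin d) k) {n : ℕ} (hp : p.IsHomogeneous n)
    (b : ℕ) (hb : n ≤ b) :
    homogeneousComponent b (g * p) = homogeneousComponent (b - n) g * p := by
  have h1 : homogeneousComponent b (g * p) = (phi (g * p)).coeff b := (phi_coeff _ _).symm
  rw [h1, map_mul, phi_homog hp, ← mul_assoc, Polynomial.coeff_mul_X_pow' _ _ _,
    if_pos hb, Polynomial.coeff_mul_C, phi_coeff]

lemma step {n : ℕ} {N : ℕ} {f : Fin N → MvPolynomial (Fin d) k}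
    (hf : ∀ i, (f i).IsHomogeneous n) {s : ℕ}
    (hs : mxIdeal k d ^ s ≤ Ideal.span (Set.range f)) (c : ℕ) :
    mxIdeal k d ^ (s + c + n) ≤ Ideal.span (Set.range f) * mxIdeal k d ^ (s + c) := by
  refine le_trans (pow_le_span _) ?_
  rw [Ideal.span_le]
  rintro _ ⟨μ, hμ, rfl⟩
  rw [Set.mem_setOf_eq] at hμ
  set q : MvPolynomial (Fin d) k := monomial μ 1 with hq_def
  have hqI : q ∈ Ideal.span (Set.range f) := hs (monomial_mem_pow (by omega))
  rw [Ideal.mem_span_range_iff_exists_fun] at hqI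
  obtain ⟨g, hg⟩ := hqI
  have hqhom : q ∈ homogeneousSubmodule (Fin d) k (s + c + n) := by
    rw [hq_def, ← hμ]
    exact isHomogeneous_monomial _ rfl
  have hq2 : q = ∑ i, homogeneousComponent (s + c) (g i) * f i := by
    have h3 : homogeneousComponent (s + c + n) q = q := by
      rw [homogeneousComponent_of_mem hqhom, if_pos rfl]
    conv_lhs => rw [← h3, ← hg]
    rw [map_sum]
    refine Finset.sum_congr rfl fun i _ => ?_
    have h4 : s + c + n - n = s + c := by omega
    rw [component_mul_homog _ _ (hf i) _ (by omega), h4]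
  show q ∈ Ideal.span (Set.range f) * mxIdeal k d ^ (s + c)
  rw [hq2]
  refine Submodule.sum_mem _ fun i _ => ?_
  rw [mul_comm (homogeneousComponent (s + c) (g i)) (f i)]
  exact Ideal.mul_mem_mul (Ideal.subset_span ⟨i, rfl⟩)
    (homog_mem_pow (homogeneousComponent_isHomogeneous _ _))

lemma descent {n : ℕ} {N : ℕ} {f : Fin N → MvPolynomial (Fin d) k}
    (hf : ∀ i, (f i).IsHomogeneous n) {s : ℕ}
    (hs : mxIdeal k d ^ s ≤ Ideal.span (Set.range f)) (m c : ℕ) :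
    mxIdeal k d ^ (s + n * m + c) ≤ (Ideal.span (Set.range f)) ^ m * mxIdeal k d ^ (s + c) := by
  induction m generalizing c with
  | zero =>
    rw [pow_zero, one_mul]
    exact Ideal.pow_le_pow_right (by omega)
  | succ m ih =>
    have h1 : s + n * (m + 1) + c = s + n * m + (c + n) := by ring
    rw [h1]
    refine le_trans (ih (c + n)) ?_
    have h2 : mxIdeal k d ^ (s + (c + n)) ≤ Ideal.span (Set.range f) * mxIdeal k d ^ (s + c) := by
      have := step hf hs c
      refine le_trans (le_of_eq ?_) this
      congr 1
      ring
    refine le_trans (Ideal.mul_mono_right h2) ?_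
    rw [← mul_assoc, mul_comm ((Ideal.span (Set.range f)) ^ m), ← pow_succ']

/-- Forward inclusion: every element of `𝔪^{nm}` is integral over `I^m`. -/
lemma forward {n : ℕ} {N : ℕ} {f : Fin N → MvPolynomial (Fin d) k}
    (hf : ∀ i, (f i).IsHomogeneous n) {s : ℕ}
    (hs : mxIdeal k d ^ s ≤ Ideal.span (Set.range f)) {m : ℕ} (hm : 1 ≤ m) (hn : 0 < n)
    {x : MvPolynomial (Fin d) k} (hx : x ∈ mxIdeal k d ^ (n * m)) :
    isIntegralOverIdeal ((Ideal.span (Set.range f)) ^ m) x := by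
  by_cases hx0 : x = 0
  · refine ⟨1, 0, one_pos, fun i _ _ => zero_mem _, ?_⟩
    simp [hx0]
  -- nonzero case
  set I : Ideal (MvPolynomial (Fin d) k) := Ideal.span (Set.range f) with hI_def
  set s' : ℕ := s + n * m with hs'_def
  have hs' : mxIdeal k d ^ s' ≤ I := le_trans (Ideal.pow_le_pow_right (by omega)) hs
  set M : Ideal (MvPolynomial (Fin d) k) := mxIdeal k d ^ s' with hM_def
  haveI : Module.Finite (MvPolynomial (Fin d) k) M :=
    Module.Finite.iff_fg.mpr (IsNoetherian.noetherian _)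
  set g : Module.End (MvPolynomial (Fin d) k) M := x • LinearMap.id with hg_def
  have hrange : LinearMap.range g ≤ (I ^ m) • (⊤ : Submodule (MvPolynomial (Fin d) k) M) := by
    rintro _ ⟨z, rfl⟩
    have h1 : (g z : MvPolynomial (Fin d) k) = x * (z : MvPolynomial (Fin d) k) := rfl
    rw [Submodule.mem_smul_top_iff, h1, Ideal.smul_eq_mul]
    have h2 : x * (z : MvPolynomial (Fin d) k) ∈ mxIdeal k d ^ (s' + n * m + 0) := by
      rw [add_zero, add_comm s' (n * m), pow_add]
      exact Ideal.mul_mem_mul hx z.2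
    have := descent hf hs' m 0 h2
    rwa [add_zero] at this
  obtain ⟨p, hpm, -, hpc, hpz⟩ :=
    LinearMap.exists_monic_and_coeff_mem_pow_and_aeval_eq_zero_of_range_le_smul
      (MvPolynomial (Fin d) k) g (I ^ m) hrange
  set T : ℕ := p.natDegree with hT_def
  -- the distinguished nonzero element of M
  have hxs' : x ^ s' ∈ M := by
    have h1 : x ^ s' ∈ (mxIdeal k d ^ (n * m)) ^ s' := Ideal.pow_mem_pow hx s'
    rw [← pow_mul] at h1
    exact Ideal.pow_le_pow_right (Nat.le_mul_of_pos_left _ (by positivity)) h1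
  set z₀ : M := ⟨x ^ s', hxs'⟩ with hz₀_def
  have hz₀ : (z₀ : MvPolynomial (Fin d) k) ≠ 0 := pow_ne_zero _ hx0
  -- g is scalar multiplication, so `aeval` is evaluation
  have hgalg : g = algebraMap (MvPolynomial (Fin d) k)
      (Module.End (MvPolynomial (Fin d) k) M) x := rfl
  have heval : Polynomial.eval x p = 0 := by
    have h1 : Polynomial.aeval g p = algebraMap (MvPolynomial (Fin d) k)
        (Module.End (MvPolynomial (Fin d) k) M) (Polynomial.eval x p) := by
      rw [hgalg, Polynomial.aeval_algebraMap_apply_eq_algebraMap_eval]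
    have h2 := congrArg (fun (q : Module.End (MvPolynomial (Fin d) k) M) => q z₀) (h1.symm.trans hpz)
    simp only [Module.algebraMap_end_apply, LinearMap.zero_apply] at h2
    have h3 : (Polynomial.eval x p * (z₀ : MvPolynomial (Fin d) k)) = 0 := by
      have := congrArg (Subtype.val) h2
      simpa using this
    rcases mul_eq_zero.mp h3 with h | h
    · exact h
    · exact absurd h hz₀
  have hT : 0 < T := by
    by_contra hT0
    push_neg at hT0
    have h1 : p = 1 := (Polynomial.Monic.natDegree_eq_zero hpm).mp (by omega)
    rw [h1, Polynomial.eval_one] at heval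
    exact one_ne_zero heval
  refine ⟨T, fun j => p.coeff (T - j), hT, ?_, ?_⟩
  · intro i hi1 hiT
    have := hpc (T - i)
    have h2 : T - (T - i) = i := by omega
    rwa [h2] at this
  · have h1 : ∑ i ∈ Finset.range T, p.coeff (T - (i + 1)) * x ^ (T - (i + 1))
        = ∑ i ∈ Finset.range T, p.coeff i * x ^ i := by
      refine Eq.trans (Finset.sum_congr rfl fun i hi => ?_)
        (Finset.sum_range_reflect (fun i => p.coeff i * x ^ i) T)
      rw [Finset.mem_range] at hi
      have : T - (i + 1) = T - 1 - i := by omega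
      rw [this]
    rw [h1]
    have h2 : Polynomial.eval x p
        = ∑ i ∈ Finset.range (T + 1), p.coeff i * x ^ i := Polynomial.eval_eq_sum_range x
    rw [Finset.sum_range_succ, hpm.coeff_natDegree, one_mul] at h2
    rw [← heval, h2, add_comm]

end ICAux

namespace ICAux

variable {k : Type} [Field k] {d : ℕ}

/-- Monomials of degree `e` in `d` variables are counted by multichoose. -/
lemma card_deg_eq (e : ℕ) :
    Nat.card {μ : Fin d →₀ ℕ // Finsupp.degree μ = e} = (d + e - 1).choose e := by
  have E : {μ : Fin d →₀ ℕ // Finsupp.degree μ = e} ≃ Sym (Fin d) e := by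
    refine ⟨fun μp => ⟨Finsupp.toMultiset μp.1, ?_⟩,
      fun sp => ⟨Multiset.toFinsupp sp.1, ?_⟩, ?_, ?_⟩
    · rw [Finsupp.card_toMultiset]; exact μp.2
    · show Finsupp.degree _ = e
      have h1 : Finsupp.degree (Multiset.toFinsupp sp.1)
          = Multiset.card (Finsupp.toMultiset (Multiset.toFinsupp sp.1)) := by
        rw [Finsupp.card_toMultiset]; rfl
      rw [h1, Multiset.toFinsupp_toMultiset]
      exact sp.2
    · intro μp
      ext : 1
      show Multiset.toFinsupp (Finsupp.toMultiset μp.1) = μp.1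
      exact Multiset.toFinsupp.symm.injective (by simp [Multiset.toFinsupp_toMultiset])
    · intro sp
      ext : 1
      exact Multiset.toFinsupp_toMultiset sp.1
  rw [Nat.card_congr E, Nat.card_eq_fintype_card, Sym.card_sym_eq_multichoose,
    Fintype.card_fin, Nat.multichoose_eq]

lemma card_deg_lt (D : ℕ) :
    Nat.card {μ : Fin d →₀ ℕ // Finsupp.degree μ < D}
      = ∑ e ∈ Finset.range D, (d + e - 1).choose e := by
  classical
  have E2 : (Σ e : Fin D, {μ : Fin d →₀ ℕ // Finsupp.degree μ = (e : ℕ)})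
      ≃ {μ : Fin d →₀ ℕ // Finsupp.degree μ < D} := by
    refine ⟨fun x => ⟨x.2.1, by rw [x.2.2]; exact x.1.isLt⟩,
      fun μp => ⟨⟨Finsupp.degree μp.1, μp.2⟩, ⟨μp.1, rfl⟩⟩, ?_, ?_⟩
    · rintro ⟨⟨e, he⟩, ⟨μ, hμ⟩⟩
      dsimp at hμ ⊢
      subst hμ
      rfl
    · rintro ⟨μ, hμ⟩
      rfl
  haveI F1 : ∀ e : ℕ, Fintype {μ : Fin d →₀ ℕ // Finsupp.degree μ = e} := fun e => by
    haveI : Finite {μ : Fin d →₀ ℕ // Finsupp.degree μ = e} := by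
      have h1 : {μ : Fin d →₀ ℕ | Finsupp.degree μ = e}.Finite :=
        (Finsupp.finite_of_degree_le e).subset (fun μ hμ => le_of_eq hμ)
      exact h1.to_subtype
    exact Fintype.ofFinite _
  rw [← Nat.card_congr E2, Nat.card_eq_fintype_card, Fintype.card_sigma]
  rw [Fin.sum_univ_eq_sum_range
    (fun e => Fintype.card {μ : Fin d →₀ ℕ // Finsupp.degree μ = e}) D]
  refine Finset.sum_congr rfl fun e _ => ?_
  rw [← card_deg_eq e, Nat.card_eq_fintype_card]

lemma card_count {D : ℕ} (hD : 1 ≤ D) :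
    Nat.card {μ : Fin d →₀ ℕ // Finsupp.degree μ < D} = (D + d - 1).choose d := by
  rw [card_deg_lt]
  rcases Nat.eq_zero_or_pos d with hd | hd
  · subst hd
    have h1 : ∀ e ∈ Finset.range D, (0 + e - 1).choose e = if e = 0 then 1 else 0 := by
      intro e _
      rcases Nat.eq_zero_or_pos e with he | he
      · simp [he]
      · rw [if_neg (by omega)]
        exact Nat.choose_eq_zero_of_lt (by omega)
    rw [Finset.sum_congr rfl h1, Finset.sum_ite_eq' (Finset.range D) 0 (fun _ => 1),
      if_pos (Finset.mem_range.mpr (by omega))]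
    simp
  · have h1 : ∀ e ∈ Finset.range D, (d + e - 1).choose e = (e + (d - 1)).choose (d - 1) := by
      intro e _
      have h2 : d + e - 1 = e + (d - 1) := by omega
      rw [h2, Nat.choose_symm_add]
    rw [Finset.sum_congr rfl h1]
    have h3 := Nat.sum_range_add_choose (D - 1) (d - 1)
    have h4 : D - 1 + 1 = D := by omega
    have h5 : D - 1 + (d - 1) + 1 = D + d - 1 := by omega
    have h6 : d - 1 + 1 = d := by omega
    rw [h4, h5, h6] at h3
    exact h3

lemma repr_coeff (p : MvPolynomial (Fin d) k) (μ : Fin d →₀ ℕ) :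
    (basisMonomials (Fin d) k).repr p μ = coeff μ p := by
  induction p using MvPolynomial.induction_on' with
  | monomial ν c =>
    have h1 : (monomial ν c : MvPolynomial (Fin d) k) = c • (basisMonomials (Fin d) k) ν := by
      rw [coe_basisMonomials]
      dsimp only
      rw [smul_monomial, smul_eq_mul, mul_one]
    have h2 : (basisMonomials (Fin d) k).repr (monomial ν c) μ = c • (if ν = μ then (1:k) else 0) := by
      conv_lhs => rw [h1]
      rw [map_smul, Module.Basis.repr_self, Finsupp.smul_apply, Finsupp.single_apply]
    rw [h2, coeff_monomial]
    by_cases h : ν = μ <;> simp [h]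
  | add p q hp hq =>
    rw [map_add, Finsupp.add_apply, coeff_add, hp, hq]

lemma finrank_quot (D : ℕ) :
    Module.finrank k (MvPolynomial (Fin d) k ⧸ (mxIdeal k d ^ D : Ideal (MvPolynomial (Fin d) k)))
      = Nat.card {μ : Fin d →₀ ℕ // Finsupp.degree μ < D} := by
  classical
  set π : MvPolynomial (Fin d) k →ₗ[k] ({μ : Fin d →₀ ℕ // Finsupp.degree μ < D} →₀ k) :=
    (Finsupp.lcomapDomain Subtype.val Subtype.val_injective).comp
      (basisMonomials (Fin d) k).repr.toLinearMap with hπ_def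
  have hπ : ∀ (p : MvPolynomial (Fin d) k) (a : {μ : Fin d →₀ ℕ // Finsupp.degree μ < D}),
      π p a = coeff a.1 p := by
    intro p a
    rw [hπ_def]
    simp only [LinearMap.coe_comp, Function.comp_apply, LinearEquiv.coe_toLinearMap]
    rw [Finsupp.lcomapDomain]
    dsimp only [LinearMap.coe_mk, AddHom.coe_mk]
    rw [Finsupp.comapDomain_apply, repr_coeff]
  have hsurj : Function.Surjective π := by
    intro y
    induction y using Finsupp.induction with
    | zero => exact ⟨0, map_zero π⟩
    | single_add a b f ha hb ih =>
      obtain ⟨q, hq⟩ := ih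
      refine ⟨monomial a.1 b + q, ?_⟩
      rw [map_add, hq]
      congr 1
      ext ⟨ν, hν⟩
      rw [hπ, coeff_monomial, Finsupp.single_apply]
      by_cases h : a = ⟨ν, hν⟩
      · rw [if_pos h, if_pos (by rw [h])]
      · rw [if_neg h, if_neg (by intro hc; exact h (Subtype.ext hc))]
  have hker : LinearMap.ker π
      = (mxIdeal k d ^ D : Ideal (MvPolynomial (Fin d) k)).restrictScalars k := by
    ext p
    rw [LinearMap.mem_ker, Submodule.restrictScalars_mem]
    constructor
    · intro h0
      rw [mem_pow_iff]
      intro μ hμ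
      by_contra hlt
      push_neg at hlt
      have h2 : π p ⟨μ, hlt⟩ = 0 := by rw [h0]; rfl
      rw [hπ] at h2
      exact (mem_support_iff.mp hμ) h2
    · intro hp
      ext ⟨ν, hν⟩
      rw [hπ, Finsupp.coe_zero, Pi.zero_apply]
      by_contra hc
      have := mem_pow_iff.mp hp ν (mem_support_iff.mpr hc)
      omega
  have e3 : (MvPolynomial (Fin d) k ⧸
        ((mxIdeal k d ^ D : Ideal (MvPolynomial (Fin d) k)).restrictScalars k))
      ≃ₗ[k] ({μ : Fin d →₀ ℕ // Finsupp.degree μ < D} →₀ k) :=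
    (Submodule.quotEquivOfEq _ _ hker.symm).trans (π.quotKerEquivOfSurjective hsurj)
  have e4 := (Submodule.Quotient.restrictScalarsEquiv k
    (mxIdeal k d ^ D : Ideal (MvPolynomial (Fin d) k))).symm
  have hfr := (e4.trans e3).finrank_eq
  rw [hfr]
  haveI : Finite {μ : Fin d →₀ ℕ // Finsupp.degree μ < D} := by
    have h1 : {μ : Fin d →₀ ℕ | Finsupp.degree μ < D}.Finite :=
      (Finsupp.finite_of_degree_le D).subset (by
        intro μ hμ
        simp only [Set.mem_setOf_eq] at hμ ⊢
        omega)
    exact h1.to_subtype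
  haveI := Fintype.ofFinite {μ : Fin d →₀ ℕ // Finsupp.degree μ < D}
  rw [Module.finrank_finsupp_self, Nat.card_eq_fintype_card]

end ICAux

open ICAux in
/-- Let `R = k[x_1, …, x_d]` and `I` an `𝔪`-primary ideal generated by forms of degree
`n`.  Then the integral closure of `I^m` is `𝔪^{nm}` for all `m ≥ 1`, and consequently
the normalized multiplicity satisfies `ē₀(I) = n^d` (expressed as the limit of
`d! · λ(R/closure(I^m)) / m^d`). -/
theorem integral_closure_of_powers {k : Type} [Field k] (d n N : ℕ) (hn : 0 < n)
    (f : Fin N → MvPolynomial (Fin d) k)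
    (hf : ∀ i, (f i).IsHomogeneous n)
    (I : Ideal (MvPolynomial (Fin d) k))
    (hI : I = Ideal.span (Set.range f))
    (hprim : I.radical = mxIdeal k d) :
    (∀ m : ℕ, 1 ≤ m →
      {x | isIntegralOverIdeal (I ^ m) x} = ((mxIdeal k d ^ (n * m) : Ideal _) : Set _)) ∧
    Tendsto (fun m : ℕ =>
        (Module.finrank k
          (MvPolynomial (Fin d) k ⧸ Ideal.span {x | isIntegralOverIdeal (I ^ m) x}) : ℝ)
        * d.factorial / (m : ℝ) ^ d)
      atTop (nhds ((n : ℝ) ^ d)) := by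
  subst hI
  -- a power of the maximal ideal lies in I
  have hrad : mxIdeal k d ≤ (Ideal.span (Set.range f)).radical := le_of_eq hprim.symm
  have hfg : (Ideal.span (Set.range f)).radical.FG := by
    rw [hprim]; exact IsNoetherian.noetherian _
  obtain ⟨s, hs⟩ := Ideal.exists_pow_le_of_le_radical_of_fg_radical hrad hfg
  have hIle : Ideal.span (Set.range f) ≤ mxIdeal k d ^ n := by
    rw [Ideal.span_le]; rintro _ ⟨i, rfl⟩; exact homog_mem_pow (hf i)
  have hpart1 : ∀ m : ℕ, 1 ≤ m →
      {x | isIntegralOverIdeal ((Ideal.span (Set.range f)) ^ m) x}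
        = ((mxIdeal k d ^ (n * m) : Ideal _) : Set _) := by
    intro m hm
    ext x
    simp only [Set.mem_setOf_eq, SetLike.mem_coe]
    constructor
    · intro hx
      apply integral_mem (a := n * m)
      obtain ⟨T, c, hT, hc, heq⟩ := hx
      refine ⟨T, c, hT, fun i h1 h2 => ?_, heq⟩
      have hle2 : (Ideal.span (Set.range f)) ^ m ≤ mxIdeal k d ^ (n * m) := by
        refine le_trans (Ideal.pow_right_mono hIle m) (le_of_eq ?_)
        rw [← pow_mul]
      exact (Ideal.pow_right_mono hle2 i) (hc i h1 h2)
    · intro hx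
      exact forward hf hs hm hn hx
  refine ⟨hpart1, ?_⟩
  have hnm : ∀ m : ℕ, 1 ≤ m → 1 ≤ n * m := by
    intro m hm
    have := Nat.mul_le_mul hn hm
    simpa using this
  have hev : ∀ m : ℕ, 1 ≤ m →
      (Module.finrank k
          (MvPolynomial (Fin d) k ⧸
            Ideal.span {x | isIntegralOverIdeal ((Ideal.span (Set.range f)) ^ m) x}) : ℝ)
        * d.factorial / (m : ℝ) ^ d
      = ∏ i ∈ Finset.range d, ((n : ℝ) + ((d - 1 - i : ℕ) : ℝ) / (m : ℝ)) := by
    intro m hm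
    have hspan : Ideal.span {x | isIntegralOverIdeal ((Ideal.span (Set.range f)) ^ m) x}
        = mxIdeal k d ^ (n * m) := by
      rw [hpart1 m hm, Ideal.span_eq]
    rw [hspan, finrank_quot, card_count (hnm m hm)]
    -- now a purely numeric identity
    have hnat : (n * m + d - 1).choose d * d.factorial
        = ∏ i ∈ Finset.range d, (n * m + (d - 1 - i)) := by
      have h1 : (n * m + d - 1).descFactorial d
          = d.factorial * (n * m + d - 1).choose d :=
        Nat.descFactorial_eq_factorial_mul_choose _ _
      have h2 : (n * m + d - 1).descFactorial d
          = ∏ i ∈ Finset.range d, (n * m + d - 1 - i) :=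
        Nat.descFactorial_eq_prod_range _ _
      rw [mul_comm, ← h1, h2]
      refine Finset.prod_congr rfl fun i hi => ?_
      rw [Finset.mem_range] at hi
      have := hnm m hm
      omega
    have hm0 : (m : ℝ) ≠ 0 := by
      have : m ≠ 0 := by omega
      exact_mod_cast this
    calc ((n * m + d - 1).choose d : ℝ) * d.factorial / (m : ℝ) ^ d
        = ((((n * m + d - 1).choose d * d.factorial : ℕ)) : ℝ) / (m : ℝ) ^ d := by
          push_cast; ring
      _ = ((∏ i ∈ Finset.range d, (n * m + (d - 1 - i)) : ℕ) : ℝ) / (m : ℝ) ^ d := by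
          rw [hnat]
      _ = (∏ i ∈ Finset.range d, ((n * m + (d - 1 - i) : ℕ) : ℝ)) / (m : ℝ) ^ d := by
          rw [Nat.cast_prod]
      _ = ∏ i ∈ Finset.range d, (((n * m + (d - 1 - i) : ℕ) : ℝ) / (m : ℝ)) := by
          rw [Finset.prod_div_distrib]
          congr 1
          rw [Finset.prod_const, Finset.card_range]
      _ = ∏ i ∈ Finset.range d, ((n : ℝ) + ((d - 1 - i : ℕ) : ℝ) / (m : ℝ)) := by
          refine Finset.prod_congr rfl fun i _ => ?_
          push_cast
          field_simp
  have hlim : Tendsto (fun m : ℕ =>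
      ∏ i ∈ Finset.range d, ((n : ℝ) + ((d - 1 - i : ℕ) : ℝ) / (m : ℝ)))
      atTop (nhds ((n : ℝ) ^ d)) := by
    have hpow : (n : ℝ) ^ d = ∏ _i ∈ Finset.range d, (n : ℝ) := by
      rw [Finset.prod_const, Finset.card_range]
    rw [hpow]
    refine tendsto_finset_prod _ fun i _ => ?_
    have h0 : Tendsto (fun m : ℕ => ((d - 1 - i : ℕ) : ℝ) / (m : ℝ)) atTop (nhds 0) :=
      Filter.Tendsto.div_atTop tendsto_const_nhds tendsto_natCast_atTop_atTop
    simpa using tendsto_const_nhds.add h0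
  refine Tendsto.congr' ?_ hlim
  filter_upwards [Filter.eventually_ge_atTop 1] with m hm
  exact (hev m hm).symm
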